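/- arXiv:math/0205024 — 3 statements merged into one kernel-verified Lean document; each statement's English description precedes it below -/
import Mathlib

section
/- In M_{1,1}(E) with char F ≠ 2, if f is a polynomial whose variables are disjoint from x_1,...,x_{2r}, and f·f_{S̄} is a weak polynomial identity for (M_{1,1}(E), W), where f_{S̄} = ∏_{j=1}^r [x_{r+j}, x_{r+1−j}]² (the polynomial of the normal c-array with columns (r+1,r),(r+1,r),...,(2r,1),(2r,1)), then f itself is a weak polynomial identity for (M_{1,1}(E), W). -/
noncomputable section

/-- The Grassmann algebra `E` over `F` on a countably infinite-dimensional space. -/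
abbrev GrAlg (F : Type*) [Field F] := ExteriorAlgebra F (ℕ →₀ F)

/-- The even/odd part `E_i` of the Grassmann algebra. -/
def Epart (F : Type*) [Field F] (i : ZMod 2) : Submodule F (GrAlg F) :=
  CliffordAlgebra.evenOdd (0 : QuadraticForm F (ℕ →₀ F)) i

/-- The generators `e_n` of the Grassmann algebra. -/
def eGen (F : Type*) [Field F] (n : ℕ) : GrAlg F :=
  ExteriorAlgebra.ι F (Finsupp.single n 1)

/-- Membership in the superalgebra `M_{1,1}(E)`: diagonal entries even,
off-diagonal entries odd. -/
def InM11 {F : Type*} [Field F] (A : Matrix (Fin 2) (Fin 2) (GrAlg F)) : Prop :=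
  A 0 0 ∈ Epart F 0 ∧ A 1 1 ∈ Epart F 0 ∧ A 0 1 ∈ Epart F 1 ∧ A 1 0 ∈ Epart F 1

/-- Membership in the space `W` of supertraceless matrices of `M_{1,1}(E)`. -/
def InW {F : Type*} [Field F] (A : Matrix (Fin 2) (Fin 2) (GrAlg F)) : Prop :=
  InM11 A ∧ A 0 0 = A 1 1

end

/-- Weak polynomial identity for `(M_{1,1}(E), W)`: the polynomial vanishes under
every substitution of the variables by supertraceless matrices. -/
def IsWeakId (F : Type*) [Field F] (f : FreeAlgebra F ℕ) : Prop :=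
  ∀ σ : ℕ → Matrix (Fin 2) (Fin 2) (GrAlg F), (∀ n, InW (σ n)) →
    FreeAlgebra.lift F σ f = 0

/-- The proper polynomial `f_{S̄} = ∏_{j=1}^{r} [x_{r+j}, x_{r+1-j}]²`
(variables `x₁, …, x_{2r}` are represented by the indices `0, …, 2r-1`). -/
def fSbar (F : Type*) [Field F] (r : ℕ) : FreeAlgebra F ℕ :=
  ((List.range r).map (fun j =>
    (FreeAlgebra.ι F (r + j) * FreeAlgebra.ι F (r - 1 - j) -
     FreeAlgebra.ι F (r - 1 - j) * FreeAlgebra.ι F (r + j)) ^ 2)).prod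

/-! ### Auxiliary material -/

open CliffordAlgebra

section Aux

variable {F : Type*} [Field F]

/-- The coordinate functionals on `ℕ →₀ F`. -/
noncomputable def coordD (F : Type*) [Field F] (i : ℕ) : Module.Dual F (ℕ →₀ F) :=
  Finsupp.lapply i

/-- Leibniz rule for right contraction on the Grassmann algebra. -/
lemma cr_mul (d : Module.Dual F (ℕ →₀ F)) (x y : GrAlg F) :
    contractRight (x * y) d
      = x * contractRight y d + contractRight x d * involute y := by
  induction y using CliffordAlgebra.induction generalizing x with
  | algebraMap r => simp [contractRight_mul_algebraMap, contractRight_algebraMap]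
  | ι m =>
    rw [contractRight_mul_ι, contractRight_ι, involute_ι, mul_neg,
      ← Algebra.commutes, ← Algebra.smul_def, sub_eq_add_neg]
  | mul a b iha ihb =>
    rw [← mul_assoc, ihb, iha,
      show involute (a*b) = involute a * involute b from map_mul _ _ _, ihb a]
    noncomm_ring
  | add a b iha ihb =>
    rw [mul_add, map_add, LinearMap.add_apply, iha, ihb, map_add, map_add,
      LinearMap.add_apply]
    noncomm_ring

lemma cr_mul_zero {d : Module.Dual F (ℕ →₀ F)} {x y : GrAlg F}
    (hx : contractRight x d = 0) (hy : contractRight y d = 0) :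
    contractRight (x * y) d = 0 := by
  rw [cr_mul, hx, hy]; simp

lemma cr_eGen {i j : ℕ} (h : j ≠ i) :
    contractRight (eGen F j) (coordD F i) = 0 := by
  rw [eGen, contractRight_ι]
  simp [coordD, Finsupp.single_apply, h]

lemma cr_genProd_zero (i : ℕ) (l : List ℕ) (h : i ∉ l) :
    contractRight ((l.map (eGen F)).prod) (coordD F i) = 0 := by
  induction l with
  | nil => simpa using contractRight_one (0 : QuadraticForm F (ℕ →₀ F)) (coordD F i)
  | cons j t ih =>
    simp only [List.map_cons, List.prod_cons]
    exact cr_mul_zero (cr_eGen (by simp at h; tauto)) (ih (by simp at h; tauto))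

/-- Cancellation: an element annihilated by the coordinate contractions of a
monomial can be cancelled against that monomial. -/
lemma cancel_genProd (z : GrAlg F) (l : List ℕ) (hl : l.Nodup)
    (hz : ∀ i ∈ l, contractRight z (coordD F i) = 0)
    (h : z * (l.map (eGen F)).prod = 0) : z = 0 := by
  induction l using List.reverseRecOn with
  | nil => simpa using h
  | append_singleton t i ih =>
    rw [List.nodup_append] at hl
    have hi : i ∉ t := by
      intro hit
      exact hl.2.2 i hit i (by simp) rfl
    have hzp : contractRight (z * (t.map (eGen F)).prod) (coordD F i) = 0 :=
      cr_mul_zero (hz i (by simp)) (cr_genProd_zero i t hi)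
    have hmul : (z * (t.map (eGen F)).prod) * eGen F i = 0 := by
      rw [mul_assoc]
      simpa [List.prod_append] using h
    have := contractRight_mul_ι (Q := (0 : QuadraticForm F (ℕ →₀ F)))
      (d := coordD F i) (Finsupp.single i 1) (z * (t.map (eGen F)).prod)
    rw [show ((ι (0 : QuadraticForm F (ℕ →₀ F))) (Finsupp.single i 1)) = eGen F i from rfl,
      hmul, map_zero, hzp, zero_mul, sub_zero] at this
    have h1 : coordD F i (Finsupp.single i 1) = 1 := by simp [coordD]
    rw [h1, one_smul] at this
    exact ih hl.1 (fun j hj => hz j (by simp [hj])) this.symm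

/-- The algebra endomorphism of the Grassmann algebra shifting the generators by `N`. -/
noncomputable def shiftHom (F : Type*) [Field F] (N : ℕ) : GrAlg F →ₐ[F] GrAlg F :=
  ExteriorAlgebra.lift F ⟨(ExteriorAlgebra.ι F).comp (Finsupp.lmapDomain F F (· + N)),
    fun m => by simp [ExteriorAlgebra.ι_sq_zero]⟩

/-- The algebra endomorphism of the Grassmann algebra shifting the generators back. -/
noncomputable def unshiftHom (F : Type*) [Field F] (N : ℕ) : GrAlg F →ₐ[F] GrAlg F :=
  ExteriorAlgebra.lift F ⟨(ExteriorAlgebra.ι F).comp (Finsupp.lmapDomain F F (· - N)),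
    fun m => by simp [ExteriorAlgebra.ι_sq_zero]⟩

lemma shiftHom_eq_zero {N : ℕ} {w : GrAlg F} (h : shiftHom F N w = 0) : w = 0 := by
  have hcomp : (unshiftHom F N).comp (shiftHom F N) = AlgHom.id F _ := by
    apply ExteriorAlgebra.hom_ext
    ext v
    simp [shiftHom, unshiftHom, ← Finsupp.mapDomain_comp, Function.comp_def]
  have := congrArg (unshiftHom F N) h
  rw [map_zero, ← AlgHom.comp_apply, hcomp, AlgHom.id_apply] at this
  exact this

lemma cr_shiftHom (N i : ℕ) (hi : i < N) (w : GrAlg F) :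
    contractRight (shiftHom F N w) (coordD F i) = 0 := by
  induction w using CliffordAlgebra.induction with
  | algebraMap r => rw [AlgHom.commutes]; exact contractRight_algebraMap _ _ _
  | ι v =>
    rw [show shiftHom F N ((ι (0 : QuadraticForm F (ℕ →₀ F))) v)
        = ExteriorAlgebra.ι F (Finsupp.mapDomain (· + N) v) by simp [shiftHom],
      contractRight_ι]
    have h0 : Finsupp.mapDomain (· + N) v i = 0 :=
      Finsupp.mapDomain_notin_range _ _ (by rintro ⟨a, ha⟩; simp only [] at ha; omega)
    simp [coordD, h0]
  | mul a b ha hb => rw [map_mul]; exact cr_mul_zero ha hb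
  | add a b ha hb => rw [map_add, map_add, LinearMap.add_apply, ha, hb, add_zero]

lemma shiftHom_mem_Epart {N : ℕ} {i : ZMod 2} {x : GrAlg F}
    (hx : x ∈ Epart F i) : shiftHom F N x ∈ Epart F i := by
  have hrange : (LinearMap.range (ι (0 : QuadraticForm F (ℕ →₀ F)))).map
      (shiftHom F N).toLinearMap ≤ LinearMap.range (ι (0 : QuadraticForm F (ℕ →₀ F))) := by
    rintro _ ⟨_, ⟨v, rfl⟩, rfl⟩
    exact ⟨Finsupp.mapDomain (· + N) v, by simp [shiftHom]⟩
  have hle : (Epart F i).map (shiftHom F N).toLinearMap ≤ Epart F i := by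
    unfold Epart evenOdd
    rw [Submodule.map_iSup]
    refine iSup_le fun j => ?_
    rw [Submodule.map_pow]
    exact le_trans (pow_le_pow_left' hrange _)
      (le_iSup (fun j : {n : ℕ // (n : ZMod 2) = i} =>
        LinearMap.range (ι (0 : QuadraticForm F (ℕ →₀ F))) ^ (j : ℕ)) j)
  exact hle ⟨x, hx, rfl⟩

lemma eGen_swap (i j : ℕ) : eGen F i * eGen F j = -(eGen F j * eGen F i) :=
  eq_neg_of_add_eq_zero_left (ExteriorAlgebra.ι_add_mul_swap _ _)

lemma eGen_sq (i : ℕ) : eGen F i * eGen F i = 0 := ExteriorAlgebra.ι_sq_zero _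

lemma InW_map_shiftHom {N : ℕ} {A : Matrix (Fin 2) (Fin 2) (GrAlg F)} (hA : InW A) :
    InW (A.map (shiftHom F N)) := by
  obtain ⟨⟨h00, h11, h01, h10⟩, hdiag⟩ := hA
  refine ⟨⟨?_, ?_, ?_, ?_⟩, ?_⟩ <;> simp only [Matrix.map_apply]
  · exact shiftHom_mem_Epart h00
  · exact shiftHom_mem_Epart h11
  · exact shiftHom_mem_Epart h01
  · exact shiftHom_mem_Epart h10
  · exact congrArg _ hdiag

/-- The special odd off-diagonal matrices. -/
noncomputable def offMat (F : Type*) [Field F] (a b : ℕ) :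
    Matrix (Fin 2) (Fin 2) (GrAlg F) :=
  !![0, eGen F a; eGen F b, 0]

lemma InW_offMat (a b : ℕ) : InW (offMat F a b) := by
  refine ⟨⟨?_, ?_, ?_, ?_⟩, ?_⟩ <;> simp only [offMat, Matrix.cons_val', Matrix.cons_val_zero,
    Matrix.cons_val_one, Matrix.head_cons, Matrix.head_fin_const, Matrix.empty_val',
    Matrix.cons_val_fin_one]
  · exact zero_mem _
  · exact zero_mem _
  · exact CliffordAlgebra.ι_mem_evenOdd_one _ _
  · exact CliffordAlgebra.ι_mem_evenOdd_one _ _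
  · rfl

lemma off_comm_gen {R : Type*} [Ring R] (A B C D : R)
    (hCB : C * B = -(B * C)) (hDA : D * A = -(A * D)) :
    (!![0, A; B, 0] : Matrix (Fin 2) (Fin 2) R) * !![0, C; D, 0]
      - !![0, C; D, 0] * !![0, A; B, 0]
      = Matrix.diagonal (fun _ => A * D + B * C) := by
  ext i j
  fin_cases i <;> fin_cases j <;>
    simp [Matrix.mul_apply, Fin.sum_univ_two, Matrix.diagonal, hCB, hDA] <;> abel

lemma key_sq_gen {R : Type*} [Ring R] (A B C D : R)
    (hAA : A * A = 0) (hBB : B * B = 0)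
    (hDA : D * A = -(A * D)) (hDB : D * B = -(B * D)) (hDC : D * C = -(C * D))
    (hCA : C * A = -(A * C)) (hCB : C * B = -(B * C)) (hBA : B * A = -(A * B)) :
    (A * D + B * C) * (A * D + B * C) = A * B * C * D + A * B * C * D := by
  have h1 : A * D * (A * D) = 0 := by
    calc A * D * (A * D) = A * (D * A) * D := by noncomm_ring
    _ = A * -(A * D) * D := by rw [hDA]
    _ = -(A * A * (D * D)) := by noncomm_ring
    _ = 0 := by rw [hAA]; simp
  have h4 : B * C * (B * C) = 0 := by
    calc B * C * (B * C) = B * (C * B) * C := by noncomm_ring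
    _ = B * -(B * C) * C := by rw [hCB]
    _ = -(B * B * (C * C)) := by noncomm_ring
    _ = 0 := by rw [hBB]; simp
  have h2 : A * D * (B * C) = A * B * C * D := by
    calc A * D * (B * C) = A * (D * B) * C := by noncomm_ring
    _ = A * -(B * D) * C := by rw [hDB]
    _ = -(A * B * (D * C)) := by noncomm_ring
    _ = -(A * B * -(C * D)) := by rw [hDC]
    _ = A * B * C * D := by noncomm_ring
  have h3 : B * C * (A * D) = A * B * C * D := by
    calc B * C * (A * D) = B * (C * A) * D := by noncomm_ring
    _ = B * -(A * C) * D := by rw [hCA]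
    _ = -(B * A * (C * D)) := by noncomm_ring
    _ = -(-(A * B) * (C * D)) := by rw [hBA]
    _ = A * B * C * D := by noncomm_ring
  calc (A * D + B * C) * (A * D + B * C)
      = A * D * (A * D) + A * D * (B * C) + B * C * (A * D) + B * C * (B * C) := by
        noncomm_ring
    _ = A * B * C * D + A * B * C * D := by rw [h1, h2, h3, h4]; abel

lemma diag_list_prod {R : Type*} [Ring R] (l : List R) :
    ((l.map (fun c => Matrix.diagonal (fun _ : Fin 2 => c))).prod)
      = Matrix.diagonal (fun _ => l.prod) := by
  induction l with
  | nil => simp [Matrix.diagonal_one]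
  | cons c t ih => simp [ih, Matrix.diagonal_mul_diagonal]

lemma smul_list_prod_gen {R : Type*} [Ring R] [Algebra F R]
    (c : F) (m : ℕ → R) (l : List ℕ) :
    ((l.map (fun j => c • m j)).prod) = c ^ l.length • (l.map m).prod := by
  induction l with
  | nil => simp
  | cons j t ih =>
    simp only [List.map_cons, List.prod_cons, List.length_cons, ih]
    rw [smul_mul_assoc, mul_smul_comm, smul_smul, pow_succ]
    ring_nf

lemma quad_prod_gen {R : Type*} [Ring R] (gen : ℕ → R) (r : ℕ) :
    ((List.range (4 * r)).map gen).prod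
      = ((List.range r).map
          (fun j => gen (4*j) * gen (4*j+1) * gen (4*j+2) * gen (4*j+3))).prod := by
  induction r with
  | zero => simp
  | succ n ih =>
    rw [show 4 * (n+1) = (4*n+1+1+1)+1 by ring, List.range_succ, List.range_succ,
      List.range_succ, List.range_succ, List.range_succ (n := n)]
    simp [List.prod_append, ih, mul_assoc]

end Aux

/-- if `f` is a polynomial whose variables are disjoint from
`x₁, …, x_{2r}` and `f · f_{S̄}` is a weak identity for `(M_{1,1}(E), W)`,
then so is `f`. -/
theorem weak_identity_cancellation (F : Type*) [Field F] [Infinite F]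
    (h2 : (2 : F) ≠ 0) (r : ℕ) (g : FreeAlgebra F ℕ) :
    letI f : FreeAlgebra F ℕ :=
      FreeAlgebra.lift F (fun n => FreeAlgebra.ι F (n + 2 * r)) g
    IsWeakId F (f * fSbar F r) → IsWeakId F f := by
  intro h σ hσ
  set N := 4 * r with hN
  set S := shiftHom F N with hS
  set Z : Matrix (Fin 2) (Fin 2) (GrAlg F) :=
    FreeAlgebra.lift F (fun n => σ (n + 2 * r)) g with hZ
  set m : GrAlg F := ((List.range N).map (eGen F)).prod with hm
  -- the special substitution
  set τ : ℕ → Matrix (Fin 2) (Fin 2) (GrAlg F) := fun k =>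
    if k < 2 * r then
      (if r ≤ k then offMat F (4 * (k - r)) (4 * (k - r) + 1)
       else offMat F (4 * (r - 1 - k) + 2) (4 * (r - 1 - k) + 3))
    else ((σ ((k - 2 * r) + 2 * r)).map S) with hτ
  have hτW : ∀ k, InW (τ k) := by
    intro k
    by_cases hk : k < 2 * r
    · by_cases hrk : r ≤ k <;> simp only [hτ, if_pos hk, if_pos, if_neg, hrk] <;>
        first
        | exact InW_offMat _ _
        | (rw [if_neg hrk]; exact InW_offMat _ _)
        | (rw [if_pos hrk]; exact InW_offMat _ _)
    · simp only [hτ, if_neg hk]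
      exact InW_map_shiftHom (hσ _)
  have h0 := h τ hτW
  rw [map_mul] at h0
  -- evaluating `f` under `τ`
  have hf : FreeAlgebra.lift F τ
      (FreeAlgebra.lift F (fun n => FreeAlgebra.ι F (n + 2 * r)) g)
      = S.mapMatrix Z := by
    have e1 : (FreeAlgebra.lift F τ).comp
        (FreeAlgebra.lift F (fun n => FreeAlgebra.ι F (n + 2 * r)))
        = FreeAlgebra.lift F (fun n => τ (n + 2 * r)) :=
      FreeAlgebra.hom_ext (funext fun n => by simp)
    have e2 : (fun n => τ (n + 2 * r)) = fun n => (σ (n + 2 * r)).map S := by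
      funext n
      have hlt : ¬ (n + 2 * r < 2 * r) := by omega
      have hsub : n + 2 * r - 2 * r = n := by omega
      simp only [hτ, if_neg hlt, hsub]
    have e3 : (S.mapMatrix).comp (FreeAlgebra.lift F (fun n => σ (n + 2 * r)))
        = FreeAlgebra.lift F (fun n => (σ (n + 2 * r)).map S) :=
      FreeAlgebra.hom_ext (funext fun n => by simp)
    have estep : FreeAlgebra.lift F τ
        ((FreeAlgebra.lift F (fun n => FreeAlgebra.ι F (n + 2 * r))) g)
        = ((FreeAlgebra.lift F τ).comp
            (FreeAlgebra.lift F (fun n => FreeAlgebra.ι F (n + 2 * r)))) g := rfl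
    rw [estep, e1, e2, ← e3]
    rfl
  -- evaluating `fSbar` under `τ`
  have hfs : FreeAlgebra.lift F τ (fSbar F r)
      = Matrix.diagonal (fun _ => (2 : F) ^ r • m) := by
    rw [fSbar, map_list_prod, List.map_map]
    have hfac : ∀ j ∈ List.range r,
        ((FreeAlgebra.lift F τ) ∘ fun j =>
          (FreeAlgebra.ι F (r + j) * FreeAlgebra.ι F (r - 1 - j) -
           FreeAlgebra.ι F (r - 1 - j) * FreeAlgebra.ι F (r + j)) ^ 2) j
        = Matrix.diagonal (fun _ : Fin 2 => (2 : F) •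
            (eGen F (4*j) * eGen F (4*j+1) * eGen F (4*j+2) * eGen F (4*j+3))) := by
      intro j hj
      rw [List.mem_range] at hj
      have h1 : τ (r + j) = offMat F (4*j) (4*j+1) := by
        have hlt : r + j < 2 * r := by omega
        have hle : r ≤ r + j := by omega
        have e : r + j - r = j := by omega
        simp only [hτ, if_pos hlt, if_pos hle, e]
      have h2 : τ (r - 1 - j) = offMat F (4*j+2) (4*j+3) := by
        have hlt : r - 1 - j < 2 * r := by omega
        have hle : ¬ r ≤ r - 1 - j := by omega
        have e : r - 1 - (r - 1 - j) = j := by omega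
        simp only [hτ, if_pos hlt, if_neg hle, e]
      simp only [Function.comp_apply, map_pow, map_sub, map_mul,
        FreeAlgebra.lift_ι_apply, h1, h2]
      rw [offMat, offMat,
        off_comm_gen _ _ _ _ (eGen_swap _ _) (eGen_swap _ _),
        pow_two, Matrix.diagonal_mul_diagonal]
      have hkey : (eGen F (4*j) * eGen F (4*j+3) + eGen F (4*j+1) * eGen F (4*j+2)) *
          (eGen F (4*j) * eGen F (4*j+3) + eGen F (4*j+1) * eGen F (4*j+2))
          = (2 : F) • (eGen F (4*j) * eGen F (4*j+1) * eGen F (4*j+2) * eGen F (4*j+3)) := by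
        rw [key_sq_gen _ _ _ _ (eGen_sq _) (eGen_sq _) (eGen_swap _ _) (eGen_swap _ _)
          (eGen_swap _ _) (eGen_swap _ _) (eGen_swap _ _) (eGen_swap _ _), two_smul]
      rw [hkey]
    rw [List.map_congr_left hfac]
    rw [show (fun j => Matrix.diagonal (fun _ : Fin 2 => (2 : F) •
        (eGen F (4*j) * eGen F (4*j+1) * eGen F (4*j+2) * eGen F (4*j+3))))
      = (fun c => Matrix.diagonal (fun _ : Fin 2 => c)) ∘ (fun j => (2 : F) •
        (eGen F (4*j) * eGen F (4*j+1) * eGen F (4*j+2) * eGen F (4*j+3))) from rfl]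
    rw [← List.map_map, diag_list_prod, smul_list_prod_gen, List.length_range]
    congr 1
    funext i
    rw [hm, hN, quad_prod_gen]
  rw [hf, hfs] at h0
  -- extract entries
  have hent : ∀ i j, Z i j = 0 := by
    intro i j
    have h0' := Matrix.ext_iff.mpr h0 i j
    rw [Matrix.mul_diagonal, AlgHom.mapMatrix_apply, Matrix.map_apply,
      mul_smul_comm, Matrix.zero_apply] at h0'
    have hzero : S (Z i j) * m = 0 :=
      (smul_eq_zero.mp h0').resolve_left (pow_ne_zero _ h2)
    have hS0 : S (Z i j) = 0 :=
      cancel_genProd _ (List.range N) List.nodup_range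
        (fun i hi => cr_shiftHom N i (List.mem_range.mp hi) _) hzero
    exact shiftHom_eq_zero hS0
  have hZ0 : Z = 0 := by
    ext i j
    exact hent i j
  -- conclude
  have e1 : (FreeAlgebra.lift F σ).comp
      (FreeAlgebra.lift F (fun n => FreeAlgebra.ι F (n + 2 * r)))
      = FreeAlgebra.lift F (fun n => σ (n + 2 * r)) :=
    FreeAlgebra.hom_ext (funext fun n => by simp)
  have efin : FreeAlgebra.lift F σ
      ((FreeAlgebra.lift F (fun n => FreeAlgebra.ι F (n + 2 * r))) g) = Z := by
    rw [hZ, ← e1]; rfl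
  rw [efin]
  exact hZ0
end

section
/- Let m = u_0 z_{σ(1)} u_1 z_{σ(2)} ⋯ z_{σ(q)} u_q be a multilinear monomial in even variables y_i (forming the words u_j) and odd variables z_1,...,z_q, and define m* = sgn(σ)·m. Then for any superalgebra A = A_0 ⊕ A_1, a multilinear polynomial f is a Z_2-graded identity of A if and only if f* is a Z_2-graded identity of the Grassmann envelope A⊗̂E = (A_0 ⊗ E_0) ⊕ (A_1 ⊗ E_1). -/
noncomputable section
open scoped TensorProduct

/-- The number of inversions of a list of naturals. -/
def invCount : List ℕ → ℕ
  | [] => 0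
  | a :: t => t.countP (fun b => decide (b < a)) + invCount t

/-- The word of odd variables (the values `≥ p`) read along the monomial
`x_{π(0)} x_{π(1)} ⋯` (the variables `0, …, p-1` are even, `p, …, p+q-1` odd). -/
def oddWord (p : ℕ) {n : ℕ} (π : Equiv.Perm (Fin n)) : List ℕ :=
  (List.ofFn (fun i => ((π i : Fin n) : ℕ))).filter (fun v => decide (p ≤ v))

/-- Evaluation of the general multilinear polynomial
`f = Σ_π c(π) x_{π(0)} ⋯ x_{π(n-1)}` at `x`. -/
def evalML (F : Type*) [Field F] {R : Type*} [Ring R] [Algebra F R] {n : ℕ}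
    (c : Equiv.Perm (Fin n) → F) (x : Fin n → R) : R :=
  ∑ π : Equiv.Perm (Fin n), c π • (List.ofFn (fun i => x (π i))).prod

/-- The homogeneous part `A_i ⊗ E_i` of the Grassmann envelope `A ⊗̂ E`. -/
def envPart (F : Type*) [Field F] {A : Type*} [Ring A] [Algebra F A]
    (M : Submodule F A) (i : ZMod 2) : Submodule F (A ⊗[F] GrAlg F) :=
  Submodule.span F {x | ∃ a ∈ M, ∃ e ∈ Epart F i, x = a ⊗ₜ[F] e}


namespace KemerAux
set_option synthInstance.maxHeartbeats 1000000
set_option maxHeartbeats 1000000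

section ListSign
variable {R : Type*} [Ring R]

lemma prod_orderedInsert (p : ℕ) (e : ℕ → R)
    (hc : ∀ i j, (¬ p ≤ i ∨ ¬ p ≤ j) → e i * e j = e j * e i)
    (ha : ∀ i j, p ≤ i → p ≤ j → e i * e j = -(e j * e i)) (a : ℕ) :
    ∀ (L : List ℕ), L.Pairwise (· ≤ ·) →
      e a * (L.map e).prod =
        ((-1 : ℤ) ^ (if p ≤ a then L.countP (fun b => decide (p ≤ b ∧ b < a)) else 0)) •
          ((L.orderedInsert (· ≤ ·) a).map e).prod
  | [], _ => by simp [List.orderedInsert]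
  | b :: L, hL => by
    obtain ⟨hbL, hL'⟩ := List.pairwise_cons.mp hL
    have IH := prod_orderedInsert p e hc ha a L hL'
    rw [List.orderedInsert]
    by_cases hab : a ≤ b
    · rw [if_pos hab]
      have hcnt : (b :: L).countP (fun c => decide (p ≤ c ∧ c < a)) = 0 := by
        rw [List.countP_eq_zero]
        intro c hc'
        have hcb : b ≤ c := by
          rcases List.mem_cons.mp hc' with rfl | hcL
          exacts [le_rfl, hbL c hcL]
        simp only [decide_eq_true_eq, not_and, not_lt]
        omega
      rw [hcnt]
      simp
    · rw [if_neg hab]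
      have hba : b < a := Nat.lt_of_not_le hab
      rw [List.map_cons, List.prod_cons, List.map_cons, List.prod_cons, ← mul_assoc]
      by_cases hpa : p ≤ a
      · by_cases hpb : p ≤ b
        · rw [ha a b hpa hpb, List.countP_cons_of_pos (by simp; omega)]
          rw [neg_mul, mul_assoc, IH, if_pos hpa, mul_smul_comm, ← neg_smul, if_pos hpa,
            pow_succ, mul_neg_one]
        · rw [hc a b (Or.inr hpb), List.countP_cons_of_neg (by simp; omega)]
          rw [mul_assoc, IH, if_pos hpa, mul_smul_comm]
      · rw [hc a b (Or.inl hpa), if_neg hpa, mul_assoc, IH, if_neg hpa, mul_smul_comm]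


lemma prod_map_eq_sign_smul_sort (p : ℕ) (e : ℕ → R)
    (hc : ∀ i j, (¬ p ≤ i ∨ ¬ p ≤ j) → e i * e j = e j * e i)
    (ha : ∀ i j, p ≤ i → p ≤ j → e i * e j = -(e j * e i)) :
    ∀ l : List ℕ,
      (l.map e).prod = ((-1 : ℤ) ^ invCount (l.filter (fun v => decide (p ≤ v)))) •
        ((l.insertionSort (· ≤ ·)).map e).prod
  | [] => by simp [invCount]
  | a :: l => by
    have IH := prod_map_eq_sign_smul_sort p e hc ha l
    rw [List.insertionSort, List.map_cons, List.prod_cons, IH, mul_smul_comm,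
      prod_orderedInsert p e hc ha a _ (List.pairwise_insertionSort _ l), smul_smul, ← pow_add]
    congr 2
    by_cases hpa : p ≤ a
    · rw [if_pos hpa, List.filter_cons_of_pos (by simpa using hpa)]
      rw [invCount]
      have h1 : List.countP (fun b => decide (p ≤ b ∧ b < a)) (List.insertionSort (· ≤ ·) l)
          = List.countP (fun b => decide (p ≤ b ∧ b < a)) l :=
        (List.perm_insertionSort _ l).countP_eq _
      have h2 : List.countP (fun b => decide (b < a)) (l.filter (fun v => decide (p ≤ v)))
          = List.countP (fun b => decide (p ≤ b ∧ b < a)) l := by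
        rw [List.countP_filter]
        apply List.countP_congr
        intro b _
        simp only [Bool.and_eq_true, decide_eq_true_eq]; tauto
      omega
    · rw [if_neg hpa, List.filter_cons_of_neg (by simpa using hpa), add_zero]

end ListSign

section Grassmann
variable (F : Type*) [Field F]

local notation "ιQ" => CliffordAlgebra.ι (0 : QuadraticForm F (ℕ →₀ F))

lemma ι_anticomm (v w : ℕ →₀ F) : ιQ v * ιQ w = -(ιQ w * ιQ v) :=
  CliffordAlgebra.ι_mul_ι_comm_of_isOrtho (QuadraticMap.IsOrtho.all v w)

lemma ι_ι_central (m m' : ℕ →₀ F) (y : GrAlg F) :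
    (ιQ m * ιQ m') * y = y * (ιQ m * ιQ m') := by
  induction y using CliffordAlgebra.induction with
  | algebraMap r => exact (Algebra.commutes r _).symm
  | ι v => rw [mul_assoc, ι_anticomm F m' v, mul_neg, ← mul_assoc, ι_anticomm F m v,
      neg_mul, neg_neg, mul_assoc]
  | mul a b hA hb => rw [← mul_assoc, hA, mul_assoc, hb, ← mul_assoc]
  | add a b hA hb => rw [mul_add, hA, hb, add_mul]

lemma even_central (x : GrAlg F)
    (hx' : x ∈ CliffordAlgebra.evenOdd (0 : QuadraticForm F (ℕ →₀ F)) 0) (y : GrAlg F) :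
    x * y = y * x := by
  induction x, hx' using CliffordAlgebra.even_induction with
  | algebraMap r => exact Algebra.commutes r y
  | add a b hA hb iha ihb => rw [add_mul, iha, ihb, mul_add]
  | ι_mul_ι_mul m m' z hz ihz =>
      rw [mul_assoc, ihz, ← mul_assoc, ι_ι_central, mul_assoc]

lemma odd_ι_anticomm (v : ℕ →₀ F) (y : GrAlg F)
    (hy' : y ∈ CliffordAlgebra.evenOdd (0 : QuadraticForm F (ℕ →₀ F)) 1) :
    ιQ v * y = -(y * ιQ v) := by
  induction y, hy' using CliffordAlgebra.odd_induction with
  | ι w => exact ι_anticomm F v w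
  | add a b hA hb iha ihb => rw [mul_add, iha, ihb, add_mul, neg_add]
  | ι_mul_ι_mul m m' z hz ihz =>
      rw [← mul_assoc, ← ι_ι_central, mul_assoc, ihz, mul_neg, ← mul_assoc]

lemma odd_anticomm (x y : GrAlg F)
    (hx' : x ∈ CliffordAlgebra.evenOdd (0 : QuadraticForm F (ℕ →₀ F)) 1)
    (hy : y ∈ CliffordAlgebra.evenOdd (0 : QuadraticForm F (ℕ →₀ F)) 1) :
    x * y = -(y * x) := by
  induction x, hx' using CliffordAlgebra.odd_induction with
  | ι w => exact odd_ι_anticomm F w y hy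
  | add a b hA hb iha ihb => rw [add_mul, iha, ihb, mul_add, neg_add]
  | ι_mul_ι_mul m m' z hz ihz =>
      rw [mul_assoc, ihz, mul_neg, ← mul_assoc, ← mul_assoc, ι_ι_central, mul_assoc, mul_assoc]

/-- contraction of a product of generators by a dual vector not matching any index -/
lemma contract_prod_eq_zero (k : ℕ) :
    ∀ L : List ℕ, k ∉ L →
      CliffordAlgebra.contractLeft (Q := (0 : QuadraticForm F (ℕ →₀ F)))
        (Finsupp.lapply k) ((L.map (fun j => ιQ (Finsupp.single j (1 : F)))).prod) = 0
  | [], _ => by simpa using CliffordAlgebra.contractLeft_one _ _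
  | m :: L, hk => by
    rw [List.map_cons, List.prod_cons, CliffordAlgebra.contractLeft_ι_mul,
      contract_prod_eq_zero k L (fun h => hk (List.mem_cons_of_mem _ h)), mul_zero, sub_zero]
    have : ((Finsupp.lapply k : (ℕ →₀ F) →ₗ[F] F)) (Finsupp.single m (1 : F)) = 0 := by
      simp [Finsupp.single_apply]
      intro h; exact absurd h.symm (fun h' => hk (h' ▸ (List.mem_cons_self (a := m) (l := L))))
    rw [this, zero_smul]

lemma prod_gen_ne_zero : ∀ L : List ℕ, L.Nodup →
    ((L.map (fun j => ιQ (Finsupp.single j (1 : F)))).prod) ≠ 0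
  | [], _ => by simp
  | k :: L, hnd => by
    intro h0
    have hk : k ∉ L := (List.nodup_cons.mp hnd).1
    have hIH := prod_gen_ne_zero L (List.nodup_cons.mp hnd).2
    apply hIH
    have := congrArg (CliffordAlgebra.contractLeft (Q := (0 : QuadraticForm F (ℕ →₀ F)))
      (Finsupp.lapply k)) h0
    rw [List.map_cons, List.prod_cons, CliffordAlgebra.contractLeft_ι_mul,
      contract_prod_eq_zero F k L hk, mul_zero, sub_zero, map_zero] at this
    rwa [Finsupp.lapply_apply, Finsupp.single_eq_same, one_smul] at this


lemma even_centralE (x : GrAlg F) (hx : x ∈ Epart F 0) (y : GrAlg F) : x * y = y * x :=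
  even_central F x hx y

lemma odd_anticommE (x y : GrAlg F) (hx : x ∈ Epart F 1) (hy : y ∈ Epart F 1) :
    x * y = -(y * x) :=
  odd_anticomm F x y hx hy

end Grassmann

lemma tmul_list_prod {F : Type*} [Field F] {A B : Type*} [Ring A] [Algebra F A]
    [Ring B] [Algebra F B] {ι : Type*} (f : ι → A) (g : ι → B) :
    ∀ l : List ι, (l.map (fun i => f i ⊗ₜ[F] g i)).prod = (l.map f).prod ⊗ₜ[F] (l.map g).prod
  | [] => by simp [Algebra.TensorProduct.one_def]
  | a :: l => by
    rw [List.map_cons, List.prod_cons, List.map_cons, List.prod_cons, List.map_cons,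
      List.prod_cons, tmul_list_prod f g l, Algebra.TensorProduct.tmul_mul_tmul]

def evalMLmap (F : Type*) [Field F] {R : Type*} [Ring R] [Algebra F R] {n : ℕ}
    (c : Equiv.Perm (Fin n) → F) : MultilinearMap F (fun _ : Fin n => R) R :=
  ∑ π : Equiv.Perm (Fin n), c π • (MultilinearMap.mkPiAlgebraFin F n R).domDomCongr π

lemma evalMLmap_apply (F : Type*) [Field F] {R : Type*} [Ring R] [Algebra F R] {n : ℕ}
    (c : Equiv.Perm (Fin n) → F) (x : Fin n → R) : evalMLmap F c x = evalML F c x := by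
  simp [evalMLmap, evalML, MultilinearMap.sum_apply]

lemma multilinear_span_zero {F M N : Type*} [Field F] [AddCommGroup M] [Module F M]
    [AddCommGroup N] [Module F N] {n : ℕ}
    (f : MultilinearMap F (fun _ : Fin n => M) N) (S : Fin n → Set M)
    (hf : ∀ x, (∀ i, x i ∈ S i) → f x = 0) :
    ∀ x, (∀ i, x i ∈ Submodule.span F (S i)) → f x = 0 := by
  suffices H : ∀ s : Finset (Fin n), ∀ x : Fin n → M,
      (∀ i ∈ s, x i ∈ Submodule.span F (S i)) → (∀ i ∉ s, x i ∈ S i) → f x = 0 by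
    intro x hx
    exact H Finset.univ x (fun i _ => hx i) (fun i hi => absurd (Finset.mem_univ i) hi)
  intro s
  induction s using Finset.induction_on with
  | empty => intro x _ hx; exact hf x fun i => hx i (Finset.notMem_empty i)
  | @insert j s hj ih =>
    intro x hx hnx
    have hxj : x j ∈ Submodule.span F (S j) := hx j (Finset.mem_insert_self j s)
    have key : ∀ v ∈ Submodule.span F (S j), f (Function.update x j v) = 0 := by
      intro v hv
      induction hv using Submodule.span_induction with
      | mem v hv =>
        apply ih
        · intro i hi
          rw [Function.update_apply]
          split
          · next h => exact absurd (h ▸ hi) hj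
          · exact hx i (Finset.mem_insert_of_mem hi)
        · intro i hi
          rcases eq_or_ne i j with rfl | hne
          · rw [Function.update_self]; exact hv
          · rw [Function.update_of_ne hne]
            apply hnx
            simp only [Finset.mem_insert, not_or]
            exact ⟨hne, hi⟩
      | zero => exact f.map_update_zero x j
      | add u v _ _ ihu ihv => rw [f.map_update_add, ihu, ihv, add_zero]
      | smul r u _ ihu => rw [f.map_update_smul, ihu, smul_zero]
    have := key (x j) hxj
    rwa [Function.update_eq_self] at this

lemma key (F : Type*) [Field F] {A : Type*} [Ring A] [Algebra F A] (p q : ℕ)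
    (c : Equiv.Perm (Fin (p + q)) → F) (a : Fin (p + q) → A) (e : Fin (p + q) → GrAlg F)
    (he0 : ∀ i : Fin (p + q), (i : ℕ) < p → e i ∈ Epart F 0)
    (he1 : ∀ i : Fin (p + q), p ≤ (i : ℕ) → e i ∈ Epart F 1) :
    evalML F (fun π => ((-1 : F) ^ invCount (oddWord p π)) * c π) (fun i => a i ⊗ₜ[F] e i) =
      evalML F c a ⊗ₜ[F] (List.ofFn e).prod := by
  classical
  set ee : ℕ → GrAlg F := fun k => if h : k < p + q then e ⟨k, h⟩ else 0 with heq
  have hcoe : ∀ i : Fin (p + q), ee (i : ℕ) = e i := by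
    intro i; rw [heq]; simp only [Fin.is_lt, dif_pos, Fin.eta]
  have hc : ∀ i j, (¬ p ≤ i ∨ ¬ p ≤ j) → ee i * ee j = ee j * ee i := by
    intro i j hij
    rcases hij with hi | hj
    · by_cases h : i < p + q
      · rw [show ee i = e ⟨i, h⟩ from dif_pos h]
        exact even_centralE F _ (he0 ⟨i, h⟩ (by simp only [Fin.val_mk]; omega)) _
      · rw [show ee i = 0 from dif_neg h, zero_mul, mul_zero]
    · by_cases h : j < p + q
      · rw [show ee j = e ⟨j, h⟩ from dif_pos h]
        exact (even_centralE F _ (he0 ⟨j, h⟩ (by simp only [Fin.val_mk]; omega)) _).symm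
      · rw [show ee j = 0 from dif_neg h, zero_mul, mul_zero]
  have ha : ∀ i j, p ≤ i → p ≤ j → ee i * ee j = -(ee j * ee i) := by
    intro i j hi hj
    by_cases h : i < p + q
    · by_cases h' : j < p + q
      · rw [show ee i = e ⟨i, h⟩ from dif_pos h, show ee j = e ⟨j, h'⟩ from dif_pos h']
        exact odd_anticommE F _ _ (he1 ⟨i, h⟩ (by simp only [Fin.val_mk]; omega))
          (he1 ⟨j, h'⟩ (by simp only [Fin.val_mk]; omega))
      · rw [show ee j = 0 from dif_neg h']; simp
    · rw [show ee i = 0 from dif_neg h]; simp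
  have main : ∀ π : Equiv.Perm (Fin (p + q)),
      ((-1 : F) ^ invCount (oddWord p π) * c π) •
          (List.ofFn fun i => a (π i) ⊗ₜ[F] e (π i)).prod
        = c π • (((List.ofFn fun i => a (π i)).prod) ⊗ₜ[F] (List.ofFn e).prod) := by
    intro π
    have h1 : (List.ofFn fun i => a (π i) ⊗ₜ[F] e (π i)).prod
        = (List.ofFn fun i => a (π i)).prod ⊗ₜ[F] (List.ofFn fun i => e (π i)).prod := by
      have := tmul_list_prod (F := F) a e (List.ofFn fun i => π i)
      rwa [List.map_ofFn, List.map_ofFn, List.map_ofFn] at this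
    have h2 : (List.ofFn fun i => e (π i))
        = (List.ofFn (fun i => ((π i : Fin (p + q)) : ℕ))).map ee := by
      rw [List.map_ofFn]
      congr 1
      funext i
      exact (hcoe (π i)).symm
    have hperm : (List.ofFn (fun i => ((π i : Fin (p + q)) : ℕ))).Perm (List.range (p + q)) := by
      have h1' : ((List.finRange (p + q)).map π).Perm (List.finRange (p + q)) := by
        refine (List.perm_ext_iff_of_nodup ((List.nodup_finRange (p + q)).map π.injective)
          (List.nodup_finRange (p + q))).mpr ?_
        intro x
        simp only [List.mem_map, List.mem_finRange, iff_true]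
        exact ⟨π.symm x, trivial, π.apply_symm_apply x⟩
      have h2' := h1'.map (Fin.val)
      rw [List.map_coe_finRange_eq_range] at h2'
      have h3' : (List.ofFn (fun i => ((π i : Fin (p + q)) : ℕ)))
          = ((List.finRange (p + q)).map π).map Fin.val := by
        rw [List.map_map, List.ofFn_eq_map]
        rfl
      rwa [h3']
    have hsort : (List.ofFn (fun i => ((π i : Fin (p + q)) : ℕ))).insertionSort (· ≤ ·)
        = List.range (p + q) :=
      List.Perm.eq_of_pairwise' (List.pairwise_insertionSort _ _) List.pairwise_le_range
        ((List.perm_insertionSort _ _).trans hperm)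
    have h4 : (List.range (p + q)).map ee = List.ofFn e := by
      rw [← List.map_coe_finRange_eq_range, List.map_map, List.ofFn_eq_map]
      congr 1
      funext i
      exact hcoe i
    have h5 : ((List.ofFn (fun i => ((π i : Fin (p + q)) : ℕ))).map ee).prod
        = ((-1 : ℤ) ^ invCount (oddWord p π)) • (List.ofFn e).prod := by
      rw [prod_map_eq_sign_smul_sort p ee hc ha _, hsort, h4]
      rfl
    have hzs : ((-1 : ℤ) ^ invCount (oddWord p π)) • (List.ofFn e).prod
        = ((-1 : F) ^ invCount (oddWord p π)) • (List.ofFn e).prod := by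
      rw [← Int.cast_smul_eq_zsmul F]
      norm_num
    rw [h1, h2, h5, hzs, TensorProduct.tmul_smul, smul_smul]
    congr 1
    have hsq : ((-1 : F) ^ invCount (oddWord p π)) * ((-1 : F) ^ invCount (oddWord p π)) = 1 := by
      rw [← pow_add]
      exact Even.neg_one_pow ⟨invCount (oddWord p π), rfl⟩
    calc (-1 : F) ^ invCount (oddWord p π) * c π * (-1 : F) ^ invCount (oddWord p π)
        = ((-1 : F) ^ invCount (oddWord p π) * (-1 : F) ^ invCount (oddWord p π)) * c π := by ring
    _ = c π := by rw [hsq, one_mul]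
  simp only [evalML]
  rw [TensorProduct.sum_tmul]
  refine Finset.sum_congr rfl fun π _ => ?_
  rw [← TensorProduct.smul_tmul']
  exact main π

end KemerAux

set_option synthInstance.maxHeartbeats 1000000
set_option maxHeartbeats 1000000

open KemerAux in
/-- Kemer: a multilinear polynomial `f` (in `p` even and `q` odd
variables) is a graded identity of the superalgebra `A = A₀ ⊕ A₁` iff `f*`
(each monomial multiplied by the sign of the permutation induced on the odd
variables) is a graded identity of the Grassmann envelope
`A ⊗̂ E = (A₀ ⊗ E₀) ⊕ (A₁ ⊗ E₁)`. -/
theorem kemer_grassmann_envelope (F : Type*) [Field F] (h2 : (2 : F) ≠ 0)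
    {A : Type*} [Ring A] [Algebra F A] (A0 A1 : Submodule F A)
    (h00 : ∀ a ∈ A0, ∀ b ∈ A0, a * b ∈ A0)
    (h01 : ∀ a ∈ A0, ∀ b ∈ A1, a * b ∈ A1)
    (h10 : ∀ a ∈ A1, ∀ b ∈ A0, a * b ∈ A1)
    (h11 : ∀ a ∈ A1, ∀ b ∈ A1, a * b ∈ A0)
    (hone : (1 : A) ∈ A0) (hsup : A0 ⊔ A1 = ⊤) (hinf : A0 ⊓ A1 = ⊥)
    (p q : ℕ) (c : Equiv.Perm (Fin (p + q)) → F) :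
    (∀ x : Fin (p + q) → A,
        (∀ i : Fin (p + q), ((i : ℕ) < p → x i ∈ A0) ∧ (p ≤ (i : ℕ) → x i ∈ A1)) →
        evalML F c x = 0) ↔
    (∀ x : Fin (p + q) → (A ⊗[F] GrAlg F),
        (∀ i : Fin (p + q),
          ((i : ℕ) < p → x i ∈ envPart F A0 0) ∧ (p ≤ (i : ℕ) → x i ∈ envPart F A1 1)) →
        evalML F (fun π => ((-1 : F) ^ invCount (oddWord p π)) * c π) x = 0) := by
  classical
  constructor
  · -- A-identity implies envelope identity
    intro hA x hx
    rw [← evalMLmap_apply]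
    set S : Fin (p + q) → Set (A ⊗[F] GrAlg F) := fun i =>
      if (i : ℕ) < p then {t | ∃ a ∈ A0, ∃ e ∈ Epart F 0, t = a ⊗ₜ[F] e}
      else {t | ∃ a ∈ A1, ∃ e ∈ Epart F 1, t = a ⊗ₜ[F] e} with hS
    refine multilinear_span_zero _ S ?_ x ?_
    · intro y hy
      have hch : ∀ i : Fin (p + q), ∃ a : A, ∃ e : GrAlg F, y i = a ⊗ₜ[F] e ∧
          ((i : ℕ) < p → a ∈ A0 ∧ e ∈ Epart F 0) ∧
          (p ≤ (i : ℕ) → a ∈ A1 ∧ e ∈ Epart F 1) := by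
        intro i
        have hyi := hy i
        by_cases h : (i : ℕ) < p
        · rw [hS] at hyi; simp only [if_pos h] at hyi
          obtain ⟨a, ha, e, he, ht⟩ := hyi
          exact ⟨a, e, ht, fun _ => ⟨ha, he⟩, fun hp => absurd h (by omega)⟩
        · rw [hS] at hyi; simp only [if_neg h] at hyi
          obtain ⟨a, ha, e, he, ht⟩ := hyi
          exact ⟨a, e, ht, fun hp => absurd hp h, fun _ => ⟨ha, he⟩⟩
      choose a e hy1 hy2 hy3 using hch
      rw [evalMLmap_apply, show y = fun i => a i ⊗ₜ[F] e i from funext hy1,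
        key F p q c a e (fun i hi => (hy2 i hi).2) (fun i hi => (hy3 i hi).2),
        hA a (fun i => ⟨fun hi => (hy2 i hi).1, fun hi => (hy3 i hi).1⟩),
        TensorProduct.zero_tmul]
    · intro i
      by_cases h : (i : ℕ) < p
      · rw [hS]; simp only [if_pos h]
        exact (hx i).1 h
      · rw [hS]; simp only [if_neg h]
        exact (hx i).2 (by omega)
  · -- envelope identity implies A-identity
    intro hE x hx
    set e : Fin (p + q) → GrAlg F := fun i =>
      if (i : ℕ) < p then 1
      else CliffordAlgebra.ι (0 : QuadraticForm F (ℕ →₀ F))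
        (Finsupp.single ((i : ℕ) - p) (1 : F)) with he
    have he0 : ∀ i : Fin (p + q), (i : ℕ) < p → e i ∈ Epart F 0 := by
      intro i hi
      rw [he]; simp only [if_pos hi]
      exact SetLike.one_mem_graded (CliffordAlgebra.evenOdd (0 : QuadraticForm F (ℕ →₀ F)))
    have he1 : ∀ i : Fin (p + q), p ≤ (i : ℕ) → e i ∈ Epart F 1 := by
      intro i hi
      rw [he]; simp only [if_neg (not_lt.mpr hi)]
      exact CliffordAlgebra.ι_mem_evenOdd_one _ _
    have h0 := hE (fun i => x i ⊗ₜ[F] e i) (fun i =>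
      ⟨fun h => Submodule.subset_span ⟨x i, (hx i).1 h, e i, he0 i h, rfl⟩,
       fun h => Submodule.subset_span ⟨x i, (hx i).2 h, e i, he1 i h, rfl⟩⟩)
    rw [key F p q c x e he0 he1] at h0
    -- identify the Grassmann factor
    have hw : (List.ofFn e).prod
        = ((List.range q).map (fun j => CliffordAlgebra.ι (0 : QuadraticForm F (ℕ →₀ F))
          (Finsupp.single j (1 : F)))).prod := by
      rw [List.ofFn_add, List.prod_append]
      have hfirst : (List.ofFn fun i : Fin p => e (Fin.castAdd q i)).prod = 1 := by
        apply List.prod_eq_one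
        intro t ht
        obtain ⟨i, hi⟩ := List.mem_ofFn.mp ht
        rw [← hi, he]
        simp only [Fin.coe_castAdd, Fin.is_lt, if_pos]
      have hsecond : (List.ofFn fun j : Fin q => e (Fin.natAdd p j))
          = (List.range q).map (fun j => CliffordAlgebra.ι (0 : QuadraticForm F (ℕ →₀ F))
            (Finsupp.single j (1 : F))) := by
        rw [← List.map_coe_finRange_eq_range, List.map_map, List.ofFn_eq_map]
        congr 1
        funext j
        simp only [Function.comp_apply, he, Fin.coe_natAdd]
        rw [if_neg (by omega)]
        have hpj : (p + (j : ℕ)) - p = (j : ℕ) := by omega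
        rw [hpj]
      show (List.ofFn fun i : Fin p => e (Fin.castAdd q i)).prod * _ = _
      rw [hfirst, one_mul, hsecond]
    have hwne : (List.ofFn e).prod ≠ 0 := by
      rw [hw]
      exact prod_gen_ne_zero F (List.range q) (List.nodup_range (n := q))
    -- separate with a dual vector
    obtain ⟨φ, hφ⟩ : ∃ φ : Module.Dual F (GrAlg F), φ ((List.ofFn e).prod) ≠ 0 := by
      by_contra h
      push_neg at h
      exact hwne ((Module.forall_dual_apply_eq_zero_iff F _).mp h)
    have h1 : φ ((List.ofFn e).prod) • evalML F c x = 0 := by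
      have hψ := congrArg ((TensorProduct.rid F A).toLinearMap.comp (LinearMap.lTensor A φ)) h0
      rwa [map_zero, LinearMap.comp_apply, LinearMap.lTensor_tmul, LinearEquiv.coe_coe,
        TensorProduct.rid_tmul] at hψ
    exact ((smul_eq_zero.mp h1).resolve_left hφ)


end
end

section
/- Partial linearization relation: modulo the ideal generated by [x_1,x_2,x_3] and [x_2,x_1][x_3,x_1][x_4,x_1] (closed under linear substitutions over an infinite field F of char ≠ 2), for any distinct b_1, b_2, b_3 the sum over all σ ∈ S_3 of [x_{a_1}, x_{b_{σ(1)}}][x_{a_2}, x_{b_{σ(2)}}][x_{a_3}, x_{b_{σ(3)}}] is zero; concretely, in M_{1,1}(E), for any supertraceless w_{a_1},w_{a_2},w_{a_3},w_{b_1},w_{b_2},w_{b_3} ∈ W, Σ_{σ∈S_3} [w_{a_1}, w_{b_{σ(1)}}][w_{a_2}, w_{b_{σ(2)}}][w_{a_3}, w_{b_{σ(3)}}] = 0. -/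
namespace GrAuxLin

variable {F : Type*} [Field F]

open CliffordAlgebra

local notation "Q0" => (0 : QuadraticForm F (ℕ →₀ F))

noncomputable abbrev iQ (v : ℕ →₀ F) : GrAlg F := CliffordAlgebra.ι Q0 v

lemma iota_anticomm (v w : ℕ →₀ F) : iQ v * iQ w = -(iQ w * iQ v) :=
  ι_mul_ι_comm_of_isOrtho (by simp [QuadraticMap.IsOrtho])

lemma even_mul_iota {x : GrAlg F} (hx : x ∈ Epart F 0) (v : ℕ →₀ F) :
    x * iQ v = iQ v * x := by
  induction x, hx using even_induction with
  | algebraMap r =>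
    exact Algebra.commutes (A := CliffordAlgebra (0 : QuadraticForm F (ℕ →₀ F))) r (iQ v)
  | add a b ha hb iha ihb => rw [add_mul, mul_add, iha, ihb]
  | ι_mul_ι_mul m1 m2 y hy ih =>
    have key : iQ m1 * iQ m2 * iQ v = iQ v * (iQ m1 * iQ m2) := by
      rw [mul_assoc, iota_anticomm m2 v, mul_neg, ← mul_assoc,
        iota_anticomm m1 v, neg_mul, neg_neg, mul_assoc]
    calc iQ m1 * iQ m2 * y * iQ v = iQ m1 * iQ m2 * (iQ v * y) := by
          rw [mul_assoc, ih]
      _ = iQ v * (iQ m1 * iQ m2 * y) := by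
          rw [← mul_assoc, key, mul_assoc, mul_assoc]

lemma odd_mul_iota {x : GrAlg F} (hx : x ∈ Epart F 1) (v : ℕ →₀ F) :
    x * iQ v = -(iQ v * x) := by
  induction x, hx using odd_induction with
  | ι w => exact iota_anticomm w v
  | add a b ha hb iha ihb => rw [add_mul, mul_add, iha, ihb, neg_add]
  | ι_mul_ι_mul m1 m2 y hy ih =>
    have key : iQ m1 * iQ m2 * iQ v = iQ v * (iQ m1 * iQ m2) := by
      rw [mul_assoc, iota_anticomm m2 v, mul_neg, ← mul_assoc,
        iota_anticomm m1 v, neg_mul, neg_neg, mul_assoc]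
    calc iQ m1 * iQ m2 * y * iQ v = iQ m1 * iQ m2 * (y * iQ v) := by
          rw [mul_assoc]
      _ = -(iQ m1 * iQ m2 * (iQ v * y)) := by rw [ih, mul_neg]
      _ = -(iQ v * (iQ m1 * iQ m2 * y)) := by
          rw [← mul_assoc, key, mul_assoc, mul_assoc]

lemma even_comm {x : GrAlg F} (hx : x ∈ Epart F 0) (y : GrAlg F) :
    x * y = y * x := by
  induction y using CliffordAlgebra.induction with
  | algebraMap r => exact Algebra.commutes r x |>.symm
  | ι v => exact even_mul_iota hx v
  | mul a b iha ihb => rw [← mul_assoc, iha, mul_assoc, ihb, ← mul_assoc]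
  | add a b iha ihb => rw [mul_add, add_mul, iha, ihb]

lemma odd_odd_anticomm {x y : GrAlg F} (hx : x ∈ Epart F 1) (hy : y ∈ Epart F 1) :
    x * y = -(y * x) := by
  induction y, hy using odd_induction with
  | ι v => exact odd_mul_iota hx v
  | add a b ha hb iha ihb => rw [mul_add, add_mul, iha, ihb, neg_add]
  | ι_mul_ι_mul m1 m2 z hz ih =>
    have hP : (iQ m1 * iQ m2 : GrAlg F) ∈ Epart F 0 := ι_mul_ι_mem_evenOdd_zero _ m1 m2
    calc x * (iQ m1 * iQ m2 * z) = iQ m1 * iQ m2 * (x * z) := by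
          conv_lhs => rw [← mul_assoc, ← even_comm hP x]
          rw [mul_assoc]
      _ = -(iQ m1 * iQ m2 * z * x) := by rw [ih]; noncomm_ring

lemma odd_mul_odd_even {x y : GrAlg F} (hx : x ∈ Epart F 1) (hy : y ∈ Epart F 1) :
    x * y ∈ Epart F 0 := by
  have := SetLike.mul_mem_graded (A := CliffordAlgebra.evenOdd Q0) hx hy
  norm_num at this
  exact this

lemma swap4 {A : Type*} [Ring A] (p q r s : A) (hqr : q*r = -(r*q)) (hqs : q*s = -(s*q))
    (hrs : r*s = -(s*r)) : p*q*(r*s) + p*s*(r*q) = 0 := by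
  have h1 : q*(r*s) = (r*s)*q := by
    rw [← mul_assoc, hqr, neg_mul, mul_assoc, hqs, mul_neg, neg_neg, ← mul_assoc]
  rw [mul_assoc p q (r*s), h1, hrs]
  noncomm_ring

lemma keyA (x0 x1 : GrAlg F) (y w : Fin 3 → GrAlg F)
    (hx1 : x1 ∈ Epart F 1) (hy : ∀ j, y j ∈ Epart F 1) :
    ∑ σ : Equiv.Perm (Fin 3), (x0 * y (σ 0)) * (x1 * y (σ 1)) * w (σ 2) = 0 := by
  refine Finset.sum_ninvolution (fun σ => σ * Equiv.swap 0 1) ?_ ?_ ?_ ?_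
  · intro σ
    simp only [Equiv.Perm.mul_apply, Equiv.swap_apply_left, Equiv.swap_apply_right,
      Equiv.swap_apply_of_ne_of_ne (show (2:Fin 3) ≠ 0 by decide) (show (2:Fin 3) ≠ 1 by decide)]
    rw [← add_mul,
      swap4 x0 (y (σ 0)) x1 (y (σ 1)) (odd_odd_anticomm (hy _) hx1)
        (odd_odd_anticomm (hy _) (hy _)) (odd_odd_anticomm hx1 (hy _)), zero_mul]
  · intro σ _ h
    have h' : Equiv.swap (0 : Fin 3) 1 = 1 := mul_left_cancel (by rw [mul_one]; exact h)
    rw [Equiv.swap_eq_one_iff] at h'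
    exact absurd h' (by decide)
  · intro σ; exact Finset.mem_univ _
  · intro σ; show σ * _ * _ = σ; rw [mul_assoc, Equiv.swap_mul_self, mul_one]

lemma keyB (x0 x2 : GrAlg F) (y u : Fin 3 → GrAlg F)
    (hx2 : x2 ∈ Epart F 1) (hy : ∀ j, y j ∈ Epart F 1) (hu : ∀ j, u j ∈ Epart F 0) :
    ∑ σ : Equiv.Perm (Fin 3), (x0 * y (σ 0)) * u (σ 1) * (x2 * y (σ 2)) = 0 := by
  refine Finset.sum_ninvolution (fun σ => σ * Equiv.swap 0 2) ?_ ?_ ?_ ?_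
  · intro σ
    simp only [Equiv.Perm.mul_apply, Equiv.swap_apply_left, Equiv.swap_apply_right,
      Equiv.swap_apply_of_ne_of_ne (show (1:Fin 3) ≠ 0 by decide) (show (1:Fin 3) ≠ 2 by decide)]
    rw [← even_comm (hu (σ 1)) (x0 * y (σ 0)),
      ← even_comm (hu (σ 1)) (x0 * y (σ 2)), mul_assoc (u (σ 1)), mul_assoc (u (σ 1)),
      ← mul_add,
      swap4 x0 (y (σ 0)) x2 (y (σ 2)) (odd_odd_anticomm (hy _) hx2)
        (odd_odd_anticomm (hy _) (hy _)) (odd_odd_anticomm hx2 (hy _)), mul_zero]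
  · intro σ _ h
    have h' : Equiv.swap (0 : Fin 3) 2 = 1 := mul_left_cancel (by rw [mul_one]; exact h)
    rw [Equiv.swap_eq_one_iff] at h'
    exact absurd h' (by decide)
  · intro σ; exact Finset.mem_univ _
  · intro σ; show σ * _ * _ = σ; rw [mul_assoc, Equiv.swap_mul_self, mul_one]

lemma keyC (x1 x2 : GrAlg F) (y u : Fin 3 → GrAlg F)
    (hx2 : x2 ∈ Epart F 1) (hy : ∀ j, y j ∈ Epart F 1) :
    ∑ σ : Equiv.Perm (Fin 3), u (σ 0) * (x1 * y (σ 1)) * (x2 * y (σ 2)) = 0 := by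
  refine Finset.sum_ninvolution (fun σ => σ * Equiv.swap 1 2) ?_ ?_ ?_ ?_
  · intro σ
    simp only [Equiv.Perm.mul_apply, Equiv.swap_apply_left, Equiv.swap_apply_right,
      Equiv.swap_apply_of_ne_of_ne (show (0:Fin 3) ≠ 1 by decide) (show (0:Fin 3) ≠ 2 by decide)]
    rw [mul_assoc (u (σ 0)), mul_assoc (u (σ 0)), ← mul_add,
      swap4 x1 (y (σ 1)) x2 (y (σ 2)) (odd_odd_anticomm (hy _) hx2)
        (odd_odd_anticomm (hy _) (hy _)) (odd_odd_anticomm hx2 (hy _)), mul_zero]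
  · intro σ _ h
    have h' : Equiv.swap (1 : Fin 3) 2 = 1 := mul_left_cancel (by rw [mul_one]; exact h)
    rw [Equiv.swap_eq_one_iff] at h'
    exact absurd h' (by decide)
  · intro σ; exact Finset.mem_univ _
  · intro σ; show σ * _ * _ = σ; rw [mul_assoc, Equiv.swap_mul_self, mul_one]

lemma scalar_sum (b c β γ : Fin 3 → GrAlg F)
    (hb : ∀ i, b i ∈ Epart F 1) (hc : ∀ i, c i ∈ Epart F 1)
    (hβ : ∀ i, β i ∈ Epart F 1) (hγ : ∀ i, γ i ∈ Epart F 1) :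
    ∑ σ : Equiv.Perm (Fin 3),
      (b 0 * c (σ 0) - β (σ 0) * γ 0) * (b 1 * c (σ 1) - β (σ 1) * γ 1) *
        (b 2 * c (σ 2) - β (σ 2) * γ 2) = 0 := by
  have hM : ∀ (i j : Fin 3), b i * c j - β j * γ i = b i * c j + γ i * β j := by
    intro i j
    rw [odd_odd_anticomm (hβ j) (hγ i), sub_neg_eq_add]
  simp only [hM, add_mul, mul_add]
  simp only [Finset.sum_add_distrib]
  have h1 := keyA (b 0) (b 1) c (fun j => b 2 * c j) (hb 1) hc
  have h2 := keyA (b 0) (b 1) c (fun j => γ 2 * β j) (hb 1) hc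
  have h3 := keyB (b 0) (b 2) c (fun j => γ 1 * β j) (hb 2) hc
    (fun j => odd_mul_odd_even (hγ 1) (hβ j))
  have h4 := keyC (γ 1) (γ 2) β (fun j => b 0 * c j) (hγ 2) hβ
  have h5 := keyC (b 1) (b 2) c (fun j => γ 0 * β j) (hb 2) hc
  have h6 := keyB (γ 0) (γ 2) β (fun j => b 1 * c j) (hγ 2) hβ
    (fun j => odd_mul_odd_even (hb 1) (hc j))
  have h7 := keyA (γ 0) (γ 1) β (fun j => b 2 * c j) (hγ 1) hβ
  have h8 := keyA (γ 0) (γ 1) β (fun j => γ 2 * β j) (hγ 1) hβ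
  rw [h1, h2, h3, h4, h5, h6, h7, h8]
  simp

lemma commW {u v : Matrix (Fin 2) (Fin 2) (GrAlg F)} (hu : InW u) (hv : InW v) :
    u * v - v * u = Matrix.diagonal (fun _ => u 0 1 * v 1 0 - v 0 1 * u 1 0) := by
  obtain ⟨⟨hu00, hu11, hu01, hu10⟩, hud⟩ := hu
  obtain ⟨⟨hv00, hv11, hv01, hv10⟩, hvd⟩ := hv
  ext i j
  simp only [Matrix.sub_apply, Matrix.mul_apply, Fin.sum_univ_two]
  fin_cases i <;> fin_cases j <;>
    simp only [Fin.mk_zero, Fin.mk_one, Matrix.diagonal_apply, reduceIte]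
  · rw [even_comm hu00 (v 0 0)]; abel
  · rw [if_neg (by decide), ← hud, ← hvd, even_comm hu00 (v 0 1), even_comm hv00 (u 0 1)]; abel
  · rw [if_neg (by decide), ← hud, ← hvd, even_comm hu00 (v 1 0), even_comm hv00 (u 1 0)]; abel
  · rw [← hud, ← hvd, even_comm hu00 (v 0 0), odd_odd_anticomm hu10 hv01,
      odd_odd_anticomm hv10 hu01]; abel

end GrAuxLin

/-- partial linearization relation: for supertraceless matrices
`w_{a₁}, w_{a₂}, w_{a₃}, w_{b₁}, w_{b₂}, w_{b₃} ∈ W`,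
`Σ_{σ ∈ S₃} [w_{a₁}, w_{b_{σ(1)}}][w_{a₂}, w_{b_{σ(2)}}][w_{a₃}, w_{b_{σ(3)}}] = 0`. -/
theorem linearization_relation (F : Type*) [Field F] [Infinite F]
    (h2 : (2 : F) ≠ 0)
    (wa wb : Fin 3 → Matrix (Fin 2) (Fin 2) (GrAlg F))
    (ha : ∀ i, InW (wa i)) (hb : ∀ i, InW (wb i)) :
    ∑ σ : Equiv.Perm (Fin 3),
      (wa 0 * wb (σ 0) - wb (σ 0) * wa 0) *
      (wa 1 * wb (σ 1) - wb (σ 1) * wa 1) *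
      (wa 2 * wb (σ 2) - wb (σ 2) * wa 2) = 0 := by
  have key : ∀ (i j : Fin 3), wa i * wb j - wb j * wa i =
      Matrix.diagonal (fun _ => wa i 0 1 * wb j 1 0 - wb j 0 1 * wa i 1 0) :=
    fun i j => GrAuxLin.commW (ha i) (hb j)
  simp only [key, Matrix.diagonal_mul_diagonal]
  ext i j
  rw [Matrix.sum_apply]
  by_cases h : i = j
  · subst h
    simp only [Matrix.diagonal_apply_eq, Matrix.zero_apply]
    exact GrAuxLin.scalar_sum (fun i => wa i 0 1) (fun j => wb j 1 0) (fun j => wb j 0 1)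
      (fun i => wa i 1 0) (fun i => (ha i).1.2.2.1) (fun j => (hb j).1.2.2.2)
      (fun j => (hb j).1.2.2.1) (fun i => (ha i).1.2.2.2)
  · simp [Matrix.diagonal_apply_ne _ h]
end
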